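/- For every integer d ≥ 1, the function x ↦ B_d(x) is log-concave on the open interval (0, d); that is, for all x, y in (0,d) and t in [0,1], B_d(tx + (1-t)y) ≥ B_d(x)^t · B_d(y)^{1-t}. -/

import Mathlib

open MeasureTheory

/-- B-splines: `B 1` is the indicator of `[0,1)`, and `B d x = ∫_0^1 B (d-1) (x - t) dt`. -/
noncomputable def B : ℕ → ℝ → ℝ
  | 0, _ => 0
  | 1, x => if 0 ≤ x ∧ x < 1 then 1 else 0
  | d + 2, x => ∫ t in (0:ℝ)..(1:ℝ), B (d + 1) (x - t)

open ENNReal NNReal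

lemma B_nonneg : ∀ d x, 0 ≤ B d x := by
  intro d
  induction d with
  | zero => intro x; simp [B]
  | succ n ih =>
    match n with
    | 0 => intro x; simp only [B]; split <;> norm_num
    | m + 1 =>
      intro x
      show 0 ≤ ∫ t in (0:ℝ)..(1:ℝ), B (m + 1) (x - t)
      exact intervalIntegral.integral_nonneg (by norm_num) (fun u _ => ih _)

lemma integrable_of_props (f : ℝ → ℝ) (c : ℝ) (hf : Measurable f) (h0 : ∀ x, 0 ≤ f x)
    (h1 : ∀ x, f x ≤ 1) (hsupp : ∀ x, x < 0 ∨ c ≤ x → f x = 0) : Integrable f := by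
  have hio : IntegrableOn f (Set.Icc (0:ℝ) c) := by
    apply Measure.integrableOn_of_bounded (M := 1) (by simp) hf.aestronglyMeasurable
    filter_upwards with x
    rw [Real.norm_eq_abs, abs_of_nonneg (h0 x)]; exact h1 x
  have : f = Set.indicator (Set.Icc (0:ℝ) c) f := by
    ext x
    by_cases hx : x ∈ Set.Icc (0:ℝ) c
    · rw [Set.indicator_of_mem hx]
    · rw [Set.indicator_of_notMem hx]
      simp only [Set.mem_Icc, not_and_or, not_le] at hx
      exact hsupp x (hx.imp id le_of_lt)
  rw [this]
  exact hio.integrable_indicator measurableSet_Icc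

lemma B_props : ∀ d, Measurable (B d) ∧ (∀ x, B d x ≤ 1) ∧
    (∀ x, x < 0 ∨ (d:ℝ) ≤ x → B d x = 0) := by
  intro d
  induction d with
  | zero => exact ⟨measurable_const, fun x => by simp [B], fun x _ => rfl⟩
  | succ n ih =>
    match n, ih with
    | 0, _ =>
      refine ⟨?_, fun x => ?_, fun x hx => ?_⟩
      · show Measurable fun x => if 0 ≤ x ∧ x < 1 then (1:ℝ) else 0
        have : (fun x => if 0 ≤ x ∧ x < 1 then (1:ℝ) else 0)
            = Set.indicator (Set.Ico (0:ℝ) 1) (fun _ => 1) := by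
          ext x; simp [Set.indicator, Set.mem_Ico]
        rw [this]
        exact (measurable_const).indicator measurableSet_Ico
      · show (if 0 ≤ x ∧ x < 1 then (1:ℝ) else 0) ≤ 1
        split <;> norm_num
      · show (if 0 ≤ x ∧ x < 1 then (1:ℝ) else 0) = 0
        rw [if_neg]; push_cast at hx; rcases hx with h | h <;> intro ⟨h1, h2⟩ <;> linarith
    | m + 1, ih =>
      obtain ⟨hmeas, hle, hsupp⟩ := ih
      have hint : Integrable (B (m+1)) :=
        integrable_of_props _ _ hmeas (B_nonneg _) hle hsupp
      have heq : ∀ x : ℝ, B (m+2) x =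
          (∫ s in (0:ℝ)..x, B (m+1) s) - ∫ s in (0:ℝ)..(x-1), B (m+1) s := by
        intro x
        show (∫ t in (0:ℝ)..(1:ℝ), B (m+1) (x - t)) = _
        rw [intervalIntegral.integral_comp_sub_left, sub_zero,
          intervalIntegral.integral_interval_sub_left hint.intervalIntegrable
            hint.intervalIntegrable]
      have hcont : Continuous (B (m+2)) := by
        rw [funext heq]
        exact ((hint.continuous_primitive 0)).sub
          ((hint.continuous_primitive 0).comp (continuous_id.sub continuous_const))
      refine ⟨hcont.measurable, fun x => ?_, fun x hx => ?_⟩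
      · show (∫ t in (0:ℝ)..(1:ℝ), B (m+1) (x - t)) ≤ 1
        calc (∫ t in (0:ℝ)..(1:ℝ), B (m+1) (x - t)) ≤ ∫ _ in (0:ℝ)..(1:ℝ), (1:ℝ) := by
              apply intervalIntegral.integral_mono_on (by norm_num)
              · have := (hint.intervalIntegrable (a := x - 0) (b := x - 1)).comp_sub_left x
                simpa using this
              · exact intervalIntegrable_const
              · exact fun u _ => hle _
          _ = 1 := by simp
      · show (∫ t in (0:ℝ)..(1:ℝ), B (m+1) (x - t)) = 0
        have : ∀ t ∈ Set.Icc (0:ℝ) 1, B (m+1) (x - t) = 0 := by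
          intro u hu
          rcases hx with h | h
          · exact hsupp _ (Or.inl (by cases hu; linarith))
          · push_cast at h
            exact hsupp _ (Or.inr (by push_cast; cases hu; linarith))
        rw [intervalIntegral.integral_congr (g := fun _ => 0) (fun u hu => this u (by
          rwa [Set.uIcc_of_le (by norm_num)] at hu))]
        simp

lemma bm_compact (K L : Set ℝ) (hK : IsCompact K) (hL : IsCompact L)
    (hKne : K.Nonempty) (hLne : L.Nonempty) (C : Set ℝ)
    (hsub : ∀ a ∈ K, ∀ b ∈ L, a + b ∈ C) :
    volume K + volume L ≤ volume C := by
  set k := sSup K with hk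
  set l := sInf L with hl
  have hkK : k ∈ K := hK.sSup_mem hKne
  have hlL : l ∈ L := hL.sInf_mem hLne
  have h1 : (fun a => a + l) '' K ⊆ C := by
    rintro _ ⟨a, ha, rfl⟩; exact hsub a ha l hlL
  have h2 : (fun b => k + b) '' L ⊆ C := by
    rintro _ ⟨b, hb, rfl⟩; exact hsub k hkK b hb
  have hdis : Disjoint (((fun a => a + l) '' K) \ {k + l}) ((fun b => k + b) '' L) := by
    rw [Set.disjoint_left]
    rintro z ⟨⟨a, ha, rfl⟩, hz⟩ ⟨b, hb, h⟩
    have h' : k + b = a + l := h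
    have h1 : a ≤ k := le_csSup hK.bddAbove ha
    have h2 : l ≤ b := csInf_le hL.bddBelow hb
    exact hz (by simp only [Set.mem_singleton_iff]; linarith)
  have hiK : (fun a => a + l) '' K = (fun z => z + -l) ⁻¹' K := by
    ext z
    constructor
    · rintro ⟨a, ha, rfl⟩; simpa using ha
    · intro h; exact ⟨z + -l, h, by ring⟩
  have hiL : (fun b => k + b) '' L = (fun z => z + -k) ⁻¹' L := by
    ext z
    constructor
    · rintro ⟨b, hb, rfl⟩; simpa [add_comm] using hb
    · intro h; exact ⟨z + -k, h, by ring⟩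
  have hmK : volume ((fun a => a + l) '' K) = volume K := by
    rw [hiK, measure_preimage_add_right]
  have hmL : volume ((fun b => k + b) '' L) = volume L := by
    rw [hiL, measure_preimage_add_right]
  calc volume K + volume L
      = volume (((fun a => a + l) '' K) \ {k + l}) + volume ((fun b => k + b) '' L) := by
        rw [hmL, measure_diff_null (measure_singleton _), hmK]
    _ = volume ((((fun a => a + l) '' K) \ {k + l}) ∪ ((fun b => k + b) '' L)) := by
        rw [measure_union hdis (hL.image (continuous_const.add continuous_id)).measurableSet]
    _ ≤ volume C := by
        apply measure_mono
        rintro z (⟨hz, _⟩ | hz)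
        · exact h1 hz
        · exact h2 hz

lemma bm_one_dim (A Bs C : Set ℝ) (hA : MeasurableSet A) (hB : MeasurableSet Bs)
    (hAfin : volume A ≠ ⊤) (hBfin : volume Bs ≠ ⊤)
    (hAne : A.Nonempty) (hBne : Bs.Nonempty)
    (hsub : ∀ a ∈ A, ∀ b ∈ Bs, a + b ∈ C) :
    volume A + volume Bs ≤ volume C := by
  apply ENNReal.le_of_forall_pos_le_add
  intro ε hε _
  obtain ⟨K, hKA, hKc, hKm⟩ := hA.exists_isCompact_lt_add hAfin
    (ε := (ε:ℝ≥0∞)/2) (by simp [hε.ne'])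
  obtain ⟨L, hLB, hLc, hLm⟩ := hB.exists_isCompact_lt_add hBfin
    (ε := (ε:ℝ≥0∞)/2) (by simp [hε.ne'])
  obtain ⟨a₀, ha₀⟩ := hAne
  obtain ⟨b₀, hb₀⟩ := hBne
  set K' := K ∪ {a₀} with hK'
  set L' := L ∪ {b₀} with hL'
  have hK'c : IsCompact K' := hKc.union isCompact_singleton
  have hL'c : IsCompact L' := hLc.union isCompact_singleton
  have hK'A : K' ⊆ A := Set.union_subset hKA (by simpa using ha₀)
  have hL'B : L' ⊆ Bs := Set.union_subset hLB (by simpa using hb₀)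
  have hbm := bm_compact K' L' hK'c hL'c ⟨a₀, Or.inr rfl⟩ ⟨b₀, Or.inr rfl⟩ C
    (fun a ha b hb => hsub a (hK'A ha) b (hL'B hb))
  have h1 : volume A ≤ volume K' + (ε:ℝ≥0∞)/2 :=
    le_trans hKm.le (add_le_add_left (measure_mono Set.subset_union_left) _)
  have h2 : volume Bs ≤ volume L' + (ε:ℝ≥0∞)/2 :=
    le_trans hLm.le (add_le_add_left (measure_mono Set.subset_union_left) _)
  calc volume A + volume Bs ≤ (volume K' + (ε:ℝ≥0∞)/2) + (volume L' + (ε:ℝ≥0∞)/2) :=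
        add_le_add h1 h2
    _ = volume K' + volume L' + ((ε:ℝ≥0∞)/2 + (ε:ℝ≥0∞)/2) := by ring
    _ = volume K' + volume L' + ε := by rw [ENNReal.add_halves]
    _ ≤ volume C + ε := add_le_add_left hbm _

lemma pl_dim1 (f g h : ℝ → ℝ) (t : ℝ) (ht0 : 0 < t) (ht1 : t < 1)
    (hf : Measurable f) (hg : Measurable g) (hh : Measurable h)
    (hfi : Integrable f) (hgi : Integrable g) (hhi : Integrable h)
    (hf0 : ∀ u, 0 ≤ f u) (hg0 : ∀ u, 0 ≤ g u) (hh0 : ∀ u, 0 ≤ h u)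
    (hf1 : ∀ u, f u ≤ 1) (hg1 : ∀ u, g u ≤ 1)
    (hfs : ∀ u, u ∉ Set.Icc (0:ℝ) 1 → f u = 0) (hgs : ∀ u, u ∉ Set.Icc (0:ℝ) 1 → g u = 0)
    (hfsup : ∀ s, s < 1 → ∃ u, s < f u) (hgsup : ∀ s, s < 1 → ∃ v, s < g v)
    (hyp : ∀ u v, f u ^ t * g v ^ (1-t) ≤ h (t*u + (1-t)*v)) :
    t * (∫ u, f u) + (1-t) * (∫ v, g v) ≤ ∫ w, h w := by
  have ht0' : (0:ℝ) < 1 - t := by linarith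
  -- level set inequality
  have hlev : ∀ s ∈ Set.Ioo (0:ℝ) 1,
      ENNReal.ofReal t * volume {u | s < f u} + ENNReal.ofReal (1-t) * volume {v | s < g v}
        ≤ volume {w | s < h w} := by
    intro s hs
    obtain ⟨hs0, hs1⟩ := hs
    set A := (fun z => t⁻¹ * z) ⁻¹' {u | s < f u} with hA
    set Bs := (fun z => (1-t)⁻¹ * z) ⁻¹' {v | s < g v} with hBs
    have hmf : MeasurableSet {u | s < f u} := measurableSet_lt measurable_const hf
    have hmg : MeasurableSet {v | s < g v} := measurableSet_lt measurable_const hg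
    have hAm : MeasurableSet A := hmf.preimage (measurable_const_mul _)
    have hBm : MeasurableSet Bs := hmg.preimage (measurable_const_mul _)
    have hfsub : {u | s < f u} ⊆ Set.Icc (0:ℝ) 1 := by
      intro u hu
      by_contra hc
      simp only [Set.mem_setOf_eq, hfs u hc] at hu; linarith
    have hgsub : {v | s < g v} ⊆ Set.Icc (0:ℝ) 1 := by
      intro v hv
      by_contra hc
      simp only [Set.mem_setOf_eq, hgs v hc] at hv; linarith
    have hffin : volume {u | s < f u} ≠ ⊤ :=
      (lt_of_le_of_lt (measure_mono hfsub) (by simp)).ne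
    have hgfin : volume {v | s < g v} ≠ ⊤ :=
      (lt_of_le_of_lt (measure_mono hgsub) (by simp)).ne
    have hvolA : volume A = ENNReal.ofReal t * volume {u | s < f u} := by
      rw [hA, Real.volume_preimage_mul_left (by positivity : t⁻¹ ≠ 0), inv_inv,
        abs_of_pos ht0]
    have hvolB : volume Bs = ENNReal.ofReal (1-t) * volume {v | s < g v} := by
      rw [hBs, Real.volume_preimage_mul_left (by positivity : (1-t)⁻¹ ≠ 0), inv_inv,
        abs_of_pos ht0']
    obtain ⟨u₀, hu₀⟩ := hfsup s hs1
    obtain ⟨v₀, hv₀⟩ := hgsup s hs1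
    have hAne : A.Nonempty := ⟨t * u₀, by simp [hA, inv_mul_cancel_left₀ ht0.ne', hu₀]⟩
    have hBne : Bs.Nonempty := ⟨(1-t) * v₀, by simp [hBs, inv_mul_cancel_left₀ ht0'.ne', hv₀]⟩
    have hsub : ∀ a ∈ A, ∀ b ∈ Bs, a + b ∈ {w | s < h w} := by
      intro a ha b hb
      have hfa : s < f (t⁻¹ * a) := ha
      have hgb : s < g ((1-t)⁻¹ * b) := hb
      have key : s < f (t⁻¹ * a) ^ t * g ((1-t)⁻¹ * b) ^ (1-t) := by
        calc s = s ^ t * s ^ (1-t) := by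
              rw [← Real.rpow_add hs0]; simp
          _ < f (t⁻¹ * a) ^ t * g ((1-t)⁻¹ * b) ^ (1-t) :=
              mul_lt_mul'' (Real.rpow_lt_rpow hs0.le hfa ht0)
                (Real.rpow_lt_rpow hs0.le hgb ht0')
                (Real.rpow_nonneg hs0.le _) (Real.rpow_nonneg hs0.le _)
      have : a + b = t * (t⁻¹ * a) + (1-t) * ((1-t)⁻¹ * b) := by
        field_simp
      show s < h (a + b)
      rw [this]
      exact lt_of_lt_of_le key (hyp _ _)
    have := bm_one_dim A Bs {w | s < h w} hAm hBm
      (by rw [hvolA]; exact ENNReal.mul_ne_top ofReal_ne_top hffin)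
      (by rw [hvolB]; exact ENNReal.mul_ne_top ofReal_ne_top hgfin)
      hAne hBne hsub
    rw [hvolA, hvolB] at this
    exact this
  have measF : Measurable fun s : ℝ => volume {u | s < f u} :=
    Antitone.measurable (fun p q hpq => measure_mono fun u hu => lt_of_le_of_lt hpq hu)
  have measG : Measurable fun s : ℝ => volume {v | s < g v} :=
    Antitone.measurable (fun p q hpq => measure_mono fun u hu => lt_of_le_of_lt hpq hu)
  have hdisj : Disjoint (Set.Ioo (0:ℝ) 1) (Set.Ici (1:ℝ)) := by
    rw [Set.disjoint_left]
    rintro s ⟨_, hs1⟩ hs1'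
    exact absurd (lt_of_lt_of_le hs1 hs1') (lt_irrefl s)
  have hioi : ∀ φ : ℝ → ℝ, (∀ u, φ u ≤ 1) →
      ∫⁻ s in Set.Ioi (0:ℝ), volume {u | s < φ u}
        = ∫⁻ s in Set.Ioo (0:ℝ) 1, volume {u | s < φ u} := by
    intro φ hφ
    rw [← Set.Ioo_union_Ici_eq_Ioi zero_lt_one,
      lintegral_union measurableSet_Ici hdisj]
    have : ∫⁻ s in Set.Ici (1:ℝ), volume {u | s < φ u} = 0 := by
      rw [setLIntegral_congr_fun measurableSet_Ici
        (fun s hs => ?_), lintegral_zero]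
      have : {u | s < φ u} = ∅ := by
        ext u; simp only [Set.mem_setOf_eq, Set.mem_empty_iff_false, iff_false, not_lt]
        exact le_trans (hφ u) hs
      rw [this]; simp
    rw [this, add_zero]
  have hF := lintegral_eq_lintegral_meas_lt volume (ae_of_all _ hf0) hf.aemeasurable
  have hG := lintegral_eq_lintegral_meas_lt volume (ae_of_all _ hg0) hg.aemeasurable
  have hH := lintegral_eq_lintegral_meas_lt volume (ae_of_all _ hh0) hh.aemeasurable
  have key2 : ENNReal.ofReal t * (∫⁻ u, ENNReal.ofReal (f u))
      + ENNReal.ofReal (1-t) * (∫⁻ v, ENNReal.ofReal (g v))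
      ≤ ∫⁻ w, ENNReal.ofReal (h w) := by
    rw [hF, hG, hH, hioi f hf1, hioi g hg1]
    have step : ∫⁻ s in Set.Ioo (0:ℝ) 1, volume {w | s < h w}
        ≤ ∫⁻ s in Set.Ioi (0:ℝ), volume {w | s < h w} :=
      lintegral_mono' (Measure.restrict_mono Set.Ioo_subset_Ioi_self le_rfl) le_rfl
    refine le_trans ?_ step
    calc ENNReal.ofReal t * (∫⁻ s in Set.Ioo (0:ℝ) 1, volume {u | s < f u})
          + ENNReal.ofReal (1-t) * (∫⁻ s in Set.Ioo (0:ℝ) 1, volume {v | s < g v})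
        = ∫⁻ s in Set.Ioo (0:ℝ) 1, (ENNReal.ofReal t * volume {u | s < f u}
            + ENNReal.ofReal (1-t) * volume {v | s < g v}) := by
          rw [lintegral_add_left (measF.const_mul _), lintegral_const_mul _ measF,
            lintegral_const_mul _ measG]
      _ ≤ ∫⁻ s in Set.Ioo (0:ℝ) 1, volume {w | s < h w} := by
          exact setLIntegral_mono_ae' measurableSet_Ioo (ae_of_all _ hlev)
  rw [← ofReal_integral_eq_lintegral_ofReal hfi (ae_of_all _ hf0),
    ← ofReal_integral_eq_lintegral_ofReal hgi (ae_of_all _ hg0),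
    ← ofReal_integral_eq_lintegral_ofReal hhi (ae_of_all _ hh0),
    ← ENNReal.ofReal_mul ht0.le, ← ENNReal.ofReal_mul ht0'.le,
    ← ENNReal.ofReal_add (mul_nonneg ht0.le (integral_nonneg hf0))
      (mul_nonneg ht0'.le (integral_nonneg hg0))] at key2
  exact (ENNReal.ofReal_le_ofReal_iff (integral_nonneg hh0)).mp key2

lemma sup_pack (f : ℝ → ℝ) (hf1 : ∀ u, f u ≤ 1) (hf0 : ∀ u, 0 ≤ f u)
    (hne : (∫ u, f u) ≠ 0) :
    ∃ a : ℝ, 0 < a ∧ a ≤ 1 ∧ (∀ u, f u ≤ a) ∧ ∀ s, s < 1 → ∃ u, s * a < f u := by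
  have hbdd : BddAbove (Set.range f) := ⟨1, by rintro _ ⟨u, rfl⟩; exact hf1 u⟩
  have hle : ∀ u, f u ≤ ⨆ u, f u := fun u => le_ciSup hbdd u
  have ha : 0 < ⨆ u, f u := by
    by_contra hc
    push_neg at hc
    have hz : ∀ u, f u = 0 := fun u => le_antisymm ((hle u).trans hc) (hf0 u)
    exact hne (by rw [funext hz]; simp)
  refine ⟨⨆ u, f u, ha, ciSup_le hf1, hle, fun s hs => ?_⟩
  exact exists_lt_of_lt_ciSup (by nlinarith)

/-- The B-spline integrand package at a point. -/
lemma B_pack (m : ℕ) (x : ℝ) (f : ℝ → ℝ)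
    (hfdef : f = (Set.Icc (0:ℝ) 1).indicator (fun u => B (m+1) (x - u))) :
    Measurable f ∧ Integrable f ∧ (∀ u, 0 ≤ f u) ∧ (∀ u, f u ≤ 1) ∧
      (∀ u, u ∉ Set.Icc (0:ℝ) 1 → f u = 0) ∧ (∫ u, f u) = B (m+2) x := by
  subst hfdef
  obtain ⟨hm, h1, hsupp⟩ := B_props (m+1)
  have hmB : Measurable fun u => B (m+1) (x - u) :=
    hm.comp (measurable_const.sub measurable_id)
  have hio : IntegrableOn (fun u => B (m+1) (x - u)) (Set.Icc (0:ℝ) 1) := by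
    apply Measure.integrableOn_of_bounded (M := 1) (by simp) hmB.aestronglyMeasurable
    filter_upwards with u
    rw [Real.norm_eq_abs, abs_of_nonneg (B_nonneg _ _)]; exact h1 _
  refine ⟨hmB.indicator measurableSet_Icc, hio.integrable_indicator measurableSet_Icc,
    fun u => Set.indicator_nonneg (fun u _ => B_nonneg _ _) u,
    fun u => ?_, fun u hu => Set.indicator_of_notMem hu _, ?_⟩
  · by_cases hu : u ∈ Set.Icc (0:ℝ) 1
    · rw [Set.indicator_of_mem hu]; exact h1 _
    · rw [Set.indicator_of_notMem hu]; norm_num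
  · rw [integral_indicator measurableSet_Icc, integral_Icc_eq_integral_Ioc,
      ← intervalIntegral.integral_of_le zero_le_one]
    rfl

lemma B_key : ∀ d, 1 ≤ d → ∀ x y t : ℝ, 0 < t → t < 1 →
    B d x ^ t * B d y ^ (1-t) ≤ B d (t*x + (1-t)*y) := by
  intro d
  induction d with
  | zero => omega
  | succ n ih =>
    match n, ih with
    | 0, _ =>
      intro _ x y t ht0 ht1
      by_cases hx : 0 ≤ x ∧ x < 1
      · by_cases hy : 0 ≤ y ∧ y < 1
        · have hz : 0 ≤ t*x + (1-t)*y ∧ t*x + (1-t)*y < 1 := by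
            constructor
            · have := mul_nonneg ht0.le hx.1
              have := mul_nonneg (by linarith : (0:ℝ) ≤ 1-t) hy.1
              linarith
            · nlinarith [hx.2, hy.2]
          show B 1 x ^ t * B 1 y ^ (1-t) ≤ B 1 (t*x + (1-t)*y)
          simp only [B, if_pos hx, if_pos hy, if_pos hz]
          rw [Real.one_rpow, Real.one_rpow, mul_one]
        · show B 1 x ^ t * B 1 y ^ (1-t) ≤ B 1 (t*x + (1-t)*y)
          simp only [B, if_neg hy]
          rw [Real.zero_rpow (by linarith : 1 - t ≠ 0), mul_zero]
          split <;> norm_num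
      · show B 1 x ^ t * B 1 y ^ (1-t) ≤ B 1 (t*x + (1-t)*y)
        simp only [B, if_neg hx]
        rw [Real.zero_rpow ht0.ne', zero_mul]
        split <;> norm_num
    | m + 1, ih =>
      intro _ x y t ht0 ht1
      have ih' := ih (by omega)
      set z := t*x + (1-t)*y with hz
      have ht0' : (0:ℝ) < 1 - t := by linarith
      by_cases hX : B (m+2) x = 0
      · rw [hX, Real.zero_rpow ht0.ne', zero_mul]; exact B_nonneg _ _
      by_cases hY : B (m+2) y = 0
      · rw [hY, Real.zero_rpow ht0'.ne', mul_zero]; exact B_nonneg _ _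
      set f := (Set.Icc (0:ℝ) 1).indicator (fun u => B (m+1) (x - u)) with hf
      set g := (Set.Icc (0:ℝ) 1).indicator (fun u => B (m+1) (y - u)) with hg
      set h := (Set.Icc (0:ℝ) 1).indicator (fun u => B (m+1) (z - u)) with hh
      obtain ⟨hfm, hfi, hf0, hf1, hfs, hfI⟩ := B_pack m x f hf
      obtain ⟨hgm, hgi, hg0, hg1, hgs, hgI⟩ := B_pack m y g hg
      obtain ⟨hhm, hhi, hh0, hh1, hhs, hhI⟩ := B_pack m z h hh
      obtain ⟨a, ha0, ha1, haub, hasup⟩ := sup_pack f hf1 hf0 (by rw [hfI]; exact hX)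
      obtain ⟨b, hb0, hb1, hbub, hbsup⟩ := sup_pack g hg1 hg0 (by rw [hgI]; exact hY)
      set D := a ^ t * b ^ (1-t) with hD
      have hDpos : 0 < D := mul_pos (Real.rpow_pos_of_pos ha0 _) (Real.rpow_pos_of_pos hb0 _)
      -- main hypothesis for normalized functions
      have hyp : ∀ u v, (f u / a) ^ t * (g v / b) ^ (1-t) ≤ h (t*u + (1-t)*v) / D := by
        intro u v
        rw [Real.div_rpow (hf0 u) ha0.le, Real.div_rpow (hg0 v) hb0.le,
          div_mul_div_comm, ← hD]
        have hmain : f u ^ t * g v ^ (1-t) ≤ h (t*u + (1-t)*v) := by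
          by_cases hu : u ∈ Set.Icc (0:ℝ) 1
          · by_cases hv : v ∈ Set.Icc (0:ℝ) 1
            · have hw : t*u + (1-t)*v ∈ Set.Icc (0:ℝ) 1 := by
                obtain ⟨hu1, hu2⟩ := hu; obtain ⟨hv1, hv2⟩ := hv
                constructor
                · have := mul_nonneg ht0.le hu1
                  have := mul_nonneg ht0'.le hv1
                  linarith
                · nlinarith
              rw [hf, hg, hh, Set.indicator_of_mem hu, Set.indicator_of_mem hv,
                Set.indicator_of_mem hw]
              have harg : z - (t*u + (1-t)*v) = t*(x-u) + (1-t)*(y-v) := by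
                rw [hz]; ring
              rw [harg]
              exact ih' (x-u) (y-v) t ht0 ht1
            · rw [hg, Set.indicator_of_notMem hv,
                Real.zero_rpow ht0'.ne', mul_zero]
              exact hh0 _
          · rw [hf, Set.indicator_of_notMem hu, Real.zero_rpow ht0.ne', zero_mul]
            exact hh0 _
        exact div_le_div_of_nonneg_right hmain hDpos.le
      have hpl := pl_dim1 (fun u => f u / a) (fun v => g v / b) (fun w => h w / D) t ht0 ht1
        (hfm.div_const a) (hgm.div_const b) (hhm.div_const D)
        (hfi.div_const a) (hgi.div_const b) (hhi.div_const D)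
        (fun u => div_nonneg (hf0 u) ha0.le) (fun v => div_nonneg (hg0 v) hb0.le)
        (fun w => div_nonneg (hh0 w) hDpos.le)
        (fun u => (div_le_one ha0).mpr (haub u)) (fun v => (div_le_one hb0).mpr (hbub v))
        (fun u hu => by show f u / a = 0; rw [hfs u hu, zero_div])
        (fun v hv => by show g v / b = 0; rw [hgs v hv, zero_div])
        (fun s hs => by
          obtain ⟨u, hu⟩ := hasup s hs
          exact ⟨u, (lt_div_iff₀ ha0).mpr hu⟩)
        (fun s hs => by
          obtain ⟨v, hv⟩ := hbsup s hs
          exact ⟨v, (lt_div_iff₀ hb0).mpr hv⟩)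
        hyp
      rw [integral_div, integral_div, integral_div, hfI, hgI, hhI] at hpl
      have hgm2 := Real.geom_mean_le_arith_mean2_weighted ht0.le ht0'.le
        (div_nonneg (B_nonneg (m+2) x) ha0.le) (div_nonneg (B_nonneg (m+2) y) hb0.le)
        (by ring)
      have hchain : (B (m+2) x / a) ^ t * (B (m+2) y / b) ^ (1-t) ≤ B (m+2) z / D :=
        le_trans hgm2 hpl
      rw [Real.div_rpow (B_nonneg _ _) ha0.le, Real.div_rpow (B_nonneg _ _) hb0.le,
        div_mul_div_comm, ← hD] at hchain
      calc B (m+2) x ^ t * B (m+2) y ^ (1-t)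
          = (B (m+2) x ^ t * B (m+2) y ^ (1-t) / D) * D := by field_simp
        _ ≤ (B (m+2) z / D) * D := mul_le_mul_of_nonneg_right hchain hDpos.le
        _ = B (m+2) z := by field_simp

theorem bspline_log_concave (d : ℕ) (hd : 1 ≤ d) (x y t : ℝ)
    (hx : x ∈ Set.Ioo (0 : ℝ) d) (hy : y ∈ Set.Ioo (0 : ℝ) d) (ht : t ∈ Set.Icc (0 : ℝ) 1) :
    B d x ^ t * B d y ^ (1 - t) ≤ B d (t * x + (1 - t) * y) := by
  obtain ⟨ht0, ht1⟩ := ht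
  rcases eq_or_lt_of_le ht0 with h0 | h0
  · rw [← h0]
    simp [Real.rpow_zero, Real.rpow_one]
  rcases eq_or_lt_of_le ht1 with h1 | h1
  · rw [h1]
    simp [Real.rpow_zero, Real.rpow_one]
  exact B_key d hd x y t h0 h1
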